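/- Let A ⊆ S be nonempty and let I be the monomial ideal of R_S generated by {x^s : s ∈ A}. If h ∈ R_S is integral over I, then supp(h) ⊆ Γ₊(I). -/

import Mathlib

open scoped BigOperators

noncomputable section

namespace ToricNewton

/-- The submonoid `S ⊆ ℤⁿ` generated by `b₁, …, b_r`. -/
def Sgroup {n r : ℕ} (b : Fin r → Fin n → ℤ) : AddSubmonoid (Fin n → ℤ) :=
  AddSubmonoid.closure (Set.range b)

/-- View an exponent `d ∈ ℕⁿ` as a point of `ℤⁿ`. -/
def expToZ {n : ℕ} (d : Fin n →₀ ℕ) : Fin n → ℤ := fun i => (d i : ℤ)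

lemma expToZ_zero {n : ℕ} : expToZ (0 : Fin n →₀ ℕ) = 0 := by
  funext i; simp [expToZ]

lemma expToZ_add {n : ℕ} (d e : Fin n →₀ ℕ) : expToZ (d + e) = expToZ d + expToZ e := by
  funext i; simp [expToZ]

/-- `R_S`: the subalgebra of `ℂ[[x₁,…,xₙ]]` of series with support in `S`;
this is the algebraic model of the local ring `𝒪_{X(S)}` at the origin. -/
def RS {n r : ℕ} (b : Fin r → Fin n → ℤ) : Subalgebra ℂ (MvPowerSeries (Fin n) ℂ) where
  carrier := { f | ∀ d : Fin n →₀ ℕ, MvPowerSeries.coeff (R := ℂ) d f ≠ 0 → expToZ d ∈ Sgroup b }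
  add_mem' := by
    intro f g hf hg d hd
    rw [Set.mem_setOf_eq] at hf hg
    rw [map_add] at hd
    by_cases h1 : MvPowerSeries.coeff (R := ℂ) d f ≠ 0
    · exact hf d h1
    · push_neg at h1
      exact hg d (by simpa [h1] using hd)
  zero_mem' := by intro d hd; simp at hd
  one_mem' := by
    intro d hd
    rw [MvPowerSeries.coeff_one] at hd
    split_ifs at hd with h
    · subst h; simpa [expToZ_zero] using (Sgroup b).zero_mem
    · exact absurd rfl hd
  mul_mem' := by
    intro f g hf hg d hd
    rw [Set.mem_setOf_eq] at hf hg
    rw [MvPowerSeries.coeff_mul] at hd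
    obtain ⟨p, hp, hne⟩ := Finset.exists_ne_zero_of_sum_ne_zero hd
    rw [Finset.HasAntidiagonal.mem_antidiagonal] at hp
    have h1 : MvPowerSeries.coeff (R := ℂ) p.1 f ≠ 0 := left_ne_zero_of_mul hne
    have h2 : MvPowerSeries.coeff (R := ℂ) p.2 g ≠ 0 := right_ne_zero_of_mul hne
    have := (Sgroup b).add_mem (hf _ h1) (hg _ h2)
    rwa [← expToZ_add, hp] at this
  algebraMap_mem' := by
    intro c d hd
    rw [MvPowerSeries.algebraMap_apply, MvPowerSeries.coeff_C] at hd
    split_ifs at hd with h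
    · subst h; simpa [expToZ_zero] using (Sgroup b).zero_mem
    · exact absurd rfl hd

/-- The exponent in `ℕⁿ` associated to `s ∈ ℤⁿ` (with nonnegative entries). -/
def natExp {n : ℕ} (s : Fin n → ℤ) : Fin n →₀ ℕ :=
  Finsupp.equivFunOnFinite.symm fun i => (s i).toNat

/-- The monomial power series `x^s` with coefficient `1`. -/
def monomialZ {n : ℕ} (s : Fin n → ℤ) : MvPowerSeries (Fin n) ℂ :=
  MvPowerSeries.monomial (R := ℂ) (natExp s) 1

/-- View a lattice point as a point of `ℝⁿ`. -/
def toReal {n : ℕ} (k : Fin n → ℤ) : Fin n → ℝ := fun i => (k i : ℝ)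

/-- The standard pairing on `ℝⁿ`. -/
def dotR {n : ℕ} (x v : Fin n → ℝ) : ℝ := ∑ i, x i * v i

/-- The cone of `S`, i.e. nonnegative real combinations of `b₁, …, b_r`. -/
def coneS {n r : ℕ} (b : Fin r → Fin n → ℤ) : Set (Fin n → ℝ) :=
  { x | ∃ lam : Fin r → ℝ, (∀ i, 0 ≤ lam i) ∧ x = ∑ i, lam i • toReal (b i) }

/-- The dual cone of `cone(S)`. -/
def dualConeS {n r : ℕ} (b : Fin r → Fin n → ℤ) : Set (Fin n → ℝ) :=
  { u | ∀ v ∈ coneS b, 0 ≤ dotR u v }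

/-- The Newton polyhedron `Γ₊(A)` of `A ⊆ S`: the convex hull of
`{k + v : k ∈ A, v ∈ cone(S)}`. -/
def NewtonPoly {n r : ℕ} (b : Fin r → Fin n → ℤ) (A : Set (Fin n → ℤ)) :
    Set (Fin n → ℝ) :=
  convexHull ℝ { x | ∃ k ∈ A, ∃ v ∈ coneS b, x = toReal k + v }

/-- `ℓ(v, P) = inf {⟨k, v⟩ : k ∈ P}`. -/
def ellP {n : ℕ} (P : Set (Fin n → ℝ)) (v : Fin n → ℝ) : ℝ :=
  sInf ((fun k => dotR k v) '' P)

/-- `Δ(v, P) = {k ∈ P : ⟨k, v⟩ = ℓ(v, P)}`. -/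
def faceP {n : ℕ} (P : Set (Fin n → ℝ)) (v : Fin n → ℝ) : Set (Fin n → ℝ) :=
  { k ∈ P | dotR k v = ellP P v }

/-- The support of a power series, as a subset of `ℤⁿ`. -/
def suppZ {n : ℕ} (g : MvPowerSeries (Fin n) ℂ) : Set (Fin n → ℤ) :=
  { s | ∃ d : Fin n →₀ ℕ, MvPowerSeries.coeff (R := ℂ) d g ≠ 0 ∧ s = expToZ d }

/-- The Newton polyhedron `Γ₊(I)` of an ideal `I ⊆ R_S`. -/
def NewtonIdeal {n r : ℕ} (b : Fin r → Fin n → ℤ) (I : Ideal ↥(RS b)) :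
    Set (Fin n → ℝ) :=
  NewtonPoly b (⋃ g ∈ (I : Set ↥(RS b)), suppZ (g : MvPowerSeries (Fin n) ℂ))

/-- `h` is integral over the ideal `I`:
`h^m + a₁ h^(m-1) + ⋯ + a_m = 0` with `aᵢ ∈ Iⁱ`. -/
def IsIntegralOverIdeal {R : Type*} [CommRing R] (I : Ideal R) (h : R) : Prop :=
  ∃ m : ℕ, 0 < m ∧ ∃ a : Fin m → R, (∀ i : Fin m, a i ∈ I ^ ((i : ℕ) + 1)) ∧
    h ^ m + ∑ i : Fin m, a i * h ^ (m - 1 - (i : ℕ)) = 0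

/-- `I°`: the ideal generated by the monomials `x^k` with `k ∈ S ∩ Γ₊(I)`. -/
def Icirc {n r : ℕ} (b : Fin r → Fin n → ℤ) (I : Ideal ↥(RS b)) : Ideal ↥(RS b) :=
  Ideal.span { m : ↥(RS b) | ∃ s : Fin n → ℤ, s ∈ Sgroup b ∧
    toReal s ∈ NewtonIdeal b I ∧ (m : MvPowerSeries (Fin n) ℂ) = monomialZ s }

/-- `C(Ī)`: the convex hull of the exponents of the monomials in the integral closure. -/
def CIbar {n r : ℕ} (b : Fin r → Fin n → ℤ) (I : Ideal ↥(RS b)) : Set (Fin n → ℝ) :=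
  convexHull ℝ (toReal '' { s : Fin n → ℤ | s ∈ Sgroup b ∧
    ∃ m : ↥(RS b), (m : MvPowerSeries (Fin n) ℂ) = monomialZ s ∧ IsIntegralOverIdeal I m })

/-- The coefficient of `g` at a lattice exponent `v`. -/
def coeffZ {n : ℕ} (g : MvPowerSeries (Fin n) ℂ) (v : Fin n → ℤ) : ℂ :=
  MvPowerSeries.coeff (R := ℂ) (natExp v) g

/-- `L(g_Δ)` evaluated at `z`: the polynomial `∑_{v ∈ supp(g) ∩ Δ} a_v z^v`. -/
def Lface {n : ℕ} (g : MvPowerSeries (Fin n) ℂ) (Δ : Set (Fin n → ℝ))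
    (z : Fin n → ℂ) : ℂ :=
  ∑ᶠ v ∈ { v : Fin n → ℤ | v ∈ suppZ g ∧ toReal v ∈ Δ },
    coeffZ g v * ∏ i, z i ^ (v i)

/-- `Δ` is a (nonempty) compact face of the polyhedron `P`. -/
def IsCompactFace {n r : ℕ} (b : Fin r → Fin n → ℤ) (P Δ : Set (Fin n → ℝ)) : Prop :=
  (∃ v ∈ dualConeS b, Δ = faceP P v) ∧ Δ.Nonempty ∧ IsCompact Δ

/-- A finite generating family of `I` is non-degenerate if on every compact face `Δ`
of `Γ₊(I)` the polynomials `L((gⱼ)_Δ)` have no common zero in the torus `(ℂ*)ⁿ`. -/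
def NondegenFamily {n r : ℕ} (b : Fin r → Fin n → ℤ) {l : ℕ}
    (g : Fin l → ↥(RS b)) (I : Ideal ↥(RS b)) : Prop :=
  ∀ Δ : Set (Fin n → ℝ), IsCompactFace b (NewtonIdeal b I) Δ →
    ¬ ∃ z : Fin n → ℂ, (∀ i, z i ≠ 0) ∧
      ∀ j, Lface (g j : MvPowerSeries (Fin n) ℂ) Δ z = 0

/-- An ideal is non-degenerate if it admits a non-degenerate finite generating family. -/
def Nondegenerate {n r : ℕ} (b : Fin r → Fin n → ℤ) (I : Ideal ↥(RS b)) : Prop :=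
  ∃ l : ℕ, ∃ g : Fin l → ↥(RS b), Ideal.span (Set.range g) = I ∧ NondegenFamily b g I

/-- The toric ideal `I_S ⊆ ℂ[x₁,…,x_r]`, generated by the binomials
`x^{α₊} - x^{α₋}` over the relations `α` of `b₁, …, b_r`. -/
def toricIdeal {n r : ℕ} (b : Fin r → Fin n → ℤ) : Ideal (MvPolynomial (Fin r) ℂ) :=
  Ideal.span { p | ∃ α : Fin r → ℤ, (∑ i, α i • b i) = 0 ∧
    p = (∏ i, MvPolynomial.X i ^ (α i).toNat) - ∏ i, MvPolynomial.X i ^ (-(α i)).toNat }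

/-- The affine toric variety `X(S) = V(I_S) ⊆ ℂ^r`. -/
def XS {n r : ℕ} (b : Fin r → Fin n → ℤ) : Set (Fin r → ℂ) :=
  { x | ∀ p ∈ toricIdeal b, MvPolynomial.eval x p = 0 }

section Aux

variable {n r : ℕ} {b : Fin r → Fin n → ℤ}

lemma sgroup_nonneg (hb : ∀ i j, 0 ≤ b i j) {k : Fin n → ℤ} (hk : k ∈ Sgroup b) :
    ∀ j, 0 ≤ k j := by
  refine AddSubmonoid.closure_induction (motive := fun x _ => ∀ j, 0 ≤ x j) ?_ ?_ ?_ hk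
  · rintro x ⟨i, rfl⟩ j; exact hb i j
  · intro j; simp
  · intro x y _ _ hx hy j; have := add_nonneg (hx j) (hy j); simpa using this

lemma toReal_add (k k' : Fin n → ℤ) : toReal (k + k') = toReal k + toReal k' := by
  funext j; simp [toReal]

lemma toReal_zero : toReal (0 : Fin n → ℤ) = 0 := by funext j; simp [toReal]

lemma coneS_zero : (0 : Fin n → ℝ) ∈ coneS b :=
  ⟨0, fun _ => le_refl 0, by simp⟩

lemma coneS_add {x y : Fin n → ℝ} (hx : x ∈ coneS b) (hy : y ∈ coneS b) :
    x + y ∈ coneS b := by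
  obtain ⟨l1, hl1, rfl⟩ := hx
  obtain ⟨l2, hl2, rfl⟩ := hy
  refine ⟨l1 + l2, fun i => add_nonneg (hl1 i) (hl2 i), ?_⟩
  rw [← Finset.sum_add_distrib]
  refine Finset.sum_congr rfl fun i _ => ?_
  simp [add_smul]

lemma coneS_smul {t : ℝ} (ht : 0 ≤ t) {x : Fin n → ℝ} (hx : x ∈ coneS b) :
    t • x ∈ coneS b := by
  obtain ⟨l, hl, rfl⟩ := hx
  refine ⟨t • l, fun i => mul_nonneg ht (hl i), ?_⟩
  rw [Finset.smul_sum]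
  refine Finset.sum_congr rfl fun i _ => ?_
  simp [smul_smul]

lemma coneS_convex : Convex ℝ (coneS b) := by
  intro x hx y hy a c ha hc _
  exact coneS_add (coneS_smul ha hx) (coneS_smul hc hy)

lemma toReal_mem_coneS {k : Fin n → ℤ} (hk : k ∈ Sgroup b) : toReal k ∈ coneS b := by
  refine AddSubmonoid.closure_induction (motive := fun x _ => toReal x ∈ coneS b) ?_ ?_ ?_ hk
  · rintro x ⟨i, rfl⟩
    refine ⟨fun j => if j = i then 1 else 0, fun j => by dsimp only; split <;> norm_num, ?_⟩
    simp only [ite_smul, one_smul, zero_smul]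
    rw [Finset.sum_ite_eq' Finset.univ i (fun j => toReal (b j))]
    simp
  · show toReal (0 : Fin n → ℤ) ∈ coneS b
    rw [toReal_zero]; exact coneS_zero
  · intro x y _ _ hx hy
    show toReal (x + y) ∈ coneS b
    rw [toReal_add]; exact coneS_add hx hy

lemma coneS_isClosed (hb_ne : ∀ i, b i ≠ 0) (hb_nonneg : ∀ i j, 0 ≤ b i j) :
    IsClosed (coneS b) := by
  apply IsSeqClosed.isClosed
  intro x p hx hp
  choose lam hlam hxe using hx
  set F : (Fin r → ℝ) → (Fin n → ℝ) := fun l => ∑ i, l i • toReal (b i) with hF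
  have hFcont : Continuous F := by
    apply continuous_finset_sum
    intro i _
    exact (continuous_apply i).smul continuous_const
  set gS : (Fin n → ℝ) → ℝ := fun y => ∑ j, y j with hgS
  have hgcont : Continuous gS := by
    apply continuous_finset_sum
    intro j _
    exact continuous_apply j
  have hone : ∀ i, (1:ℝ) ≤ ∑ j, toReal (b i) j := by
    intro i
    obtain ⟨j₀, hj₀⟩ := Function.ne_iff.mp (hb_ne i)
    simp only [Pi.zero_apply] at hj₀
    have h1 : (1:ℤ) ≤ b i j₀ := by have := hb_nonneg i j₀; omega
    have h2 : (1:ℤ) ≤ ∑ j, b i j := by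
      calc (1:ℤ) ≤ b i j₀ := h1
        _ ≤ ∑ j, b i j := Finset.single_le_sum (fun j _ => hb_nonneg i j) (Finset.mem_univ j₀)
    have : ((1:ℤ):ℝ) ≤ ((∑ j, b i j : ℤ) : ℝ) := Int.cast_le.mpr h2
    simpa [toReal] using this
  have hgx : ∀ k i, lam k i ≤ gS (x k) := by
    intro k i
    have hexp : gS (x k) = ∑ i', lam k i' * (∑ j, toReal (b i') j) := by
      rw [hxe k]
      simp only [gS, Finset.sum_apply, Pi.smul_apply, smul_eq_mul, Finset.mul_sum]
      rw [Finset.sum_comm]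
    have hterm : ∀ i', 0 ≤ lam k i' * (∑ j, toReal (b i') j) := fun i' =>
      mul_nonneg (hlam k i') (le_trans zero_le_one (hone i'))
    have h1 : lam k i * (∑ j, toReal (b i) j) ≤ gS (x k) := by
      rw [hexp]
      exact Finset.single_le_sum (fun i' _ => hterm i') (Finset.mem_univ i)
    have h2 : lam k i ≤ lam k i * (∑ j, toReal (b i) j) := by
      nlinarith [hlam k i, hone i]
    linarith
  have htend : Filter.Tendsto (fun k => gS (x k)) Filter.atTop (nhds (gS p)) :=
    (hgcont.tendsto p).comp hp
  obtain ⟨M, hM⟩ := htend.bddAbove_range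
  have hlamM : ∀ k, lam k ∈ Set.Icc (0 : Fin r → ℝ) (fun _ => M) := by
    intro k
    constructor
    · intro i; exact hlam k i
    · intro i; exact (hgx k i).trans (hM ⟨k, rfl⟩)
  obtain ⟨linf, hlinf, φ, hφ, hconv⟩ := isCompact_Icc.tendsto_subseq hlamM
  refine ⟨linf, fun i => hlinf.1 i, ?_⟩
  have h1 : Filter.Tendsto (fun k => F (lam (φ k))) Filter.atTop (nhds (F linf)) :=
    (hFcont.tendsto linf).comp hconv
  have h2 : Filter.Tendsto (x ∘ φ) Filter.atTop (nhds p) := hp.comp hφ.tendsto_atTop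
  have h3 : (fun k => F (lam (φ k))) = x ∘ φ := funext fun k => (hxe (φ k)).symm
  rw [h3] at h1
  exact tendsto_nhds_unique h2 h1

end Aux

section Lev

open MvPowerSeries

variable {n : ℕ}

lemma W_zero {W : (Fin n →₀ ℕ) → ℝ} (hW : ∀ d e, W (d + e) = W d + W e) : W 0 = 0 := by
  have := hW 0 0; simp only [add_zero] at this; linarith

lemma lev_mul_ge {W : (Fin n →₀ ℕ) → ℝ} (hW : ∀ d e, W (d + e) = W d + W e)
    {c₁ c₂ : ℝ} {g₁ g₂ : MvPowerSeries (Fin n) ℂ}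
    (h₁ : ∀ d, coeff (R := ℂ) d g₁ ≠ 0 → c₁ ≤ W d)
    (h₂ : ∀ d, coeff (R := ℂ) d g₂ ≠ 0 → c₂ ≤ W d) :
    ∀ d, coeff (R := ℂ) d (g₁ * g₂) ≠ 0 → c₁ + c₂ ≤ W d := by
  intro d hd
  rw [coeff_mul] at hd
  obtain ⟨p, hp, hne⟩ := Finset.exists_ne_zero_of_sum_ne_zero hd
  rw [Finset.HasAntidiagonal.mem_antidiagonal] at hp
  have := add_le_add (h₁ _ (left_ne_zero_of_mul hne)) (h₂ _ (right_ne_zero_of_mul hne))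
  rwa [← hW, hp] at this

lemma lev_mul_le {W : (Fin n →₀ ℕ) → ℝ} (hW : ∀ d e, W (d + e) = W d + W e)
    {c₁ c₂ : ℝ} {g₁ g₂ : MvPowerSeries (Fin n) ℂ}
    (h₁ : ∀ d, coeff (R := ℂ) d g₁ ≠ 0 → W d ≤ c₁)
    (h₂ : ∀ d, coeff (R := ℂ) d g₂ ≠ 0 → W d ≤ c₂) :
    ∀ d, coeff (R := ℂ) d (g₁ * g₂) ≠ 0 → W d ≤ c₁ + c₂ := by
  intro d hd
  rw [coeff_mul] at hd
  obtain ⟨p, hp, hne⟩ := Finset.exists_ne_zero_of_sum_ne_zero hd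
  rw [Finset.HasAntidiagonal.mem_antidiagonal] at hp
  have := add_le_add (h₁ _ (left_ne_zero_of_mul hne)) (h₂ _ (right_ne_zero_of_mul hne))
  rwa [← hW, hp] at this

lemma lev_pow_ge {W : (Fin n →₀ ℕ) → ℝ} (hW : ∀ d e, W (d + e) = W d + W e)
    {c : ℝ} {g : MvPowerSeries (Fin n) ℂ}
    (hg : ∀ d, coeff (R := ℂ) d g ≠ 0 → c ≤ W d) :
    ∀ (k : ℕ) (d), coeff (R := ℂ) d (g ^ k) ≠ 0 → (k : ℝ) * c ≤ W d := by
  intro k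
  induction k with
  | zero =>
    intro d hd
    rw [pow_zero, coeff_one] at hd
    have hd0 : d = 0 := by by_contra hc; simp [hc] at hd
    subst hd0; rw [W_zero hW]; simp
  | succ k IH =>
    intro d hd
    rw [pow_succ] at hd
    have := lev_mul_ge hW IH hg d hd
    push_cast
    push_cast at this
    linarith

lemma lev_pow_le {W : (Fin n →₀ ℕ) → ℝ} (hW : ∀ d e, W (d + e) = W d + W e)
    {c : ℝ} {g : MvPowerSeries (Fin n) ℂ}
    (hg : ∀ d, coeff (R := ℂ) d g ≠ 0 → W d ≤ c) :
    ∀ (k : ℕ) (d), coeff (R := ℂ) d (g ^ k) ≠ 0 → W d ≤ (k : ℝ) * c := by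
  intro k
  induction k with
  | zero =>
    intro d hd
    rw [pow_zero, coeff_one] at hd
    have hd0 : d = 0 := by by_contra hc; simp [hc] at hd
    subst hd0; rw [W_zero hW]; simp
  | succ k IH =>
    intro d hd
    rw [pow_succ] at hd
    have := lev_mul_le hW IH hg d hd
    push_cast
    push_cast at this
    linarith

lemma coeff_pow_initial {W : (Fin n →₀ ℕ) → ℝ} (hW : ∀ d e, W (d + e) = W d + W e)
    {μ : ℝ} {h P : MvPowerSeries (Fin n) ℂ}
    (hμ : ∀ d, coeff (R := ℂ) d h ≠ 0 → μ ≤ W d)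
    (hP : ∀ d, coeff (R := ℂ) d P = if W d = μ then coeff (R := ℂ) d h else 0) :
    ∀ (k : ℕ) (d), W d ≤ (k : ℝ) * μ → coeff (R := ℂ) d (h ^ k) = coeff (R := ℂ) d (P ^ k) := by
  intro k
  induction k with
  | zero => intro d _; rfl
  | succ k IH =>
    intro d hd
    rw [pow_succ, pow_succ, coeff_mul, coeff_mul]
    refine Finset.sum_congr rfl ?_
    intro p hp
    rw [Finset.HasAntidiagonal.mem_antidiagonal] at hp
    push_cast at hd
    by_cases hf : coeff (R := ℂ) p.2 h = 0
    · have hf' : coeff (R := ℂ) p.2 P = 0 := by rw [hP]; split <;> simp [hf]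
      rw [hf, hf', mul_zero, mul_zero]
    · have hf2 : μ ≤ W p.2 := hμ _ hf
      have hsum : W p.1 + W p.2 = W d := by rw [← hW, hp]
      by_cases he : coeff (R := ℂ) p.1 (h ^ k) = 0
      · by_cases hle : W p.1 ≤ (k : ℝ) * μ
        · rw [he, zero_mul, ← IH p.1 hle, he, zero_mul]
        · exfalso; push_neg at hle; linarith
      · have he2 : (k : ℝ) * μ ≤ W p.1 := lev_pow_ge hW hμ k p.1 he
        have hWp1 : W p.1 ≤ (k : ℝ) * μ := by linarith
        have hWp2 : W p.2 = μ := by linarith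
        rw [IH p.1 hWp1, hP p.2, if_pos hWp2]

end Lev

set_option synthInstance.maxHeartbeats 1000000

section SpanLev

open MvPowerSeries

variable {n r : ℕ} {b : Fin r → Fin n → ℤ}

lemma mem_RS {g : MvPowerSeries (Fin n) ℂ} (hg : g ∈ RS b) :
    ∀ d, coeff (R := ℂ) d g ≠ 0 → expToZ d ∈ Sgroup b := hg

lemma coe_RS_add (x y : ↥(RS b)) :
    ((x + y : ↥(RS b)) : MvPowerSeries (Fin n) ℂ) = ↑x + ↑y := rfl

lemma coe_RS_mul (x y : ↥(RS b)) :
    ((x * y : ↥(RS b)) : MvPowerSeries (Fin n) ℂ) = ↑x * ↑y := rfl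

lemma lev_span {W : (Fin n →₀ ℕ) → ℝ} (hW : ∀ d e, W (d + e) = W d + W e)
    (hWS : ∀ d, expToZ d ∈ Sgroup b → 0 ≤ W d)
    {c : ℝ} (G : Set ↥(RS b))
    (hG : ∀ g ∈ G, ∀ d, coeff (R := ℂ) d (g : MvPowerSeries (Fin n) ℂ) ≠ 0 → c ≤ W d) :
    ∀ x : ↥(RS b), x ∈ Ideal.span G → ∀ d, coeff (R := ℂ) d (x : MvPowerSeries (Fin n) ℂ) ≠ 0 → c ≤ W d := by
  intro x hx
  induction hx using Submodule.span_induction with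
  | mem g hg => exact hG g hg
  | zero => intro d hd; simp at hd
  | add u v hu hv ihu ihv =>
    intro d hd
    rw [coe_RS_add, map_add] at hd
    by_cases h1 : coeff (R := ℂ) d (u : MvPowerSeries (Fin n) ℂ) ≠ 0
    · exact ihu d h1
    · push_neg at h1
      exact ihv d (by simpa [h1] using hd)
  | smul a u hu ihu =>
    intro d hd
    have hcoe : ((a • u : ↥(RS b)) : MvPowerSeries (Fin n) ℂ) = ↑a * ↑u := rfl
    rw [hcoe] at hd
    have ha : ∀ d, coeff (R := ℂ) d (a : MvPowerSeries (Fin n) ℂ) ≠ 0 → (0:ℝ) ≤ W d := by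
      intro e he; exact hWS e (mem_RS a.2 e he)
    have := lev_mul_ge hW ha ihu d hd
    linarith

lemma lev_span_pow {W : (Fin n →₀ ℕ) → ℝ} (hW : ∀ d e, W (d + e) = W d + W e)
    (hWS : ∀ d, expToZ d ∈ Sgroup b → 0 ≤ W d)
    {c : ℝ} (G : Set ↥(RS b))
    (hG : ∀ g ∈ G, ∀ d, coeff (R := ℂ) d (g : MvPowerSeries (Fin n) ℂ) ≠ 0 → c ≤ W d) :
    ∀ (k : ℕ), ∀ x : ↥(RS b), x ∈ (Ideal.span G) ^ (k + 1) →
      ∀ d, coeff (R := ℂ) d (x : MvPowerSeries (Fin n) ℂ) ≠ 0 → ((k : ℝ) + 1) * c ≤ W d := by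
  intro k
  induction k with
  | zero =>
    intro x hx d hd
    rw [pow_one] at hx
    have := lev_span hW hWS G hG x hx d hd
    push_cast
    linarith
  | succ k IH =>
    intro x hx
    rw [pow_succ] at hx
    refine Submodule.mul_induction_on
      (C := fun (x : ↥(RS b)) => ∀ d, coeff (R := ℂ) d (x : MvPowerSeries (Fin n) ℂ) ≠ 0 → (((k + 1 : ℕ) : ℝ) + 1) * c ≤ W d)
      hx ?_ ?_
    · intro mm hmm z hz d hd
      rw [coe_RS_mul] at hd
      have h1 := IH mm hmm
      have h2 := lev_span hW hWS G hG z hz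
      have := lev_mul_ge hW h1 h2 d hd
      push_cast at this ⊢
      linarith
    · intro u v hu hv d hd
      rw [coe_RS_add, map_add] at hd
      by_cases h1 : coeff (R := ℂ) d (u : MvPowerSeries (Fin n) ℂ) ≠ 0
      · exact hu d h1
      · push_neg at h1
        exact hv d (by simpa [h1] using hd)

lemma exists_finset_pow {R : Type*} [CommRing R] [DecidableEq R] (G : Set R) :
    ∀ (k : ℕ) (x : R), x ∈ (Ideal.span G) ^ k →
      ∃ T : Finset R, ↑T ⊆ G ∧ x ∈ (Ideal.span (T : Set R)) ^ k := by
  intro k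
  induction k with
  | zero =>
    intro x _
    exact ⟨∅, by simp, by simp [Ideal.one_eq_top]⟩
  | succ k IH =>
    intro x hx
    rw [pow_succ] at hx
    refine Submodule.mul_induction_on
      (C := fun (x : R) => ∃ T : Finset R, ↑T ⊆ G ∧ x ∈ (Ideal.span (T : Set R)) ^ (k + 1)) hx ?_ ?_
    · intro mm hmm z hz
      obtain ⟨T₁, hT₁, hm'⟩ := IH mm hmm
      obtain ⟨T₂, hT₂, hz'⟩ := Submodule.mem_span_finite_of_mem_span hz
      have hmono1 : Ideal.span (↑T₁ : Set R) ≤ Ideal.span (↑(T₁ ∪ T₂) : Set R) :=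
        Ideal.span_mono (by rw [Finset.coe_union]; exact Set.subset_union_left)
      have hmono2 : Ideal.span (↑T₂ : Set R) ≤ Ideal.span (↑(T₁ ∪ T₂) : Set R) :=
        Ideal.span_mono (by rw [Finset.coe_union]; exact Set.subset_union_right)
      refine ⟨T₁ ∪ T₂, ?_, ?_⟩
      · intro t ht
        rcases Finset.mem_union.mp (by exact_mod_cast ht) with h | h
        · exact hT₁ h
        · exact hT₂ h
      · rw [pow_succ]
        exact Submodule.mul_mem_mul (Ideal.pow_right_mono hmono1 k hm') (hmono2 hz')
    · intro u v hu hv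
      obtain ⟨T₁, hT₁, hu'⟩ := hu
      obtain ⟨T₂, hT₂, hv'⟩ := hv
      have hmono1 : Ideal.span (↑T₁ : Set R) ≤ Ideal.span (↑(T₁ ∪ T₂) : Set R) :=
        Ideal.span_mono (by rw [Finset.coe_union]; exact Set.subset_union_left)
      have hmono2 : Ideal.span (↑T₂ : Set R) ≤ Ideal.span (↑(T₁ ∪ T₂) : Set R) :=
        Ideal.span_mono (by rw [Finset.coe_union]; exact Set.subset_union_right)
      refine ⟨T₁ ∪ T₂, ?_, ?_⟩
      · intro t ht
        rcases Finset.mem_union.mp (by exact_mod_cast ht) with h | h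
        · exact hT₁ h
        · exact hT₂ h
      · exact add_mem (Ideal.pow_right_mono hmono1 (k+1) hu')
          (Ideal.pow_right_mono hmono2 (k+1) hv')

end SpanLev


lemma expToZ_natExp {n : ℕ} {t : Fin n → ℤ} (ht : ∀ j, 0 ≤ t j) : expToZ (natExp t) = t := by
  funext j
  simp [expToZ, natExp, Int.toNat_of_nonneg (ht j)]

lemma monomialZ_mem_RS {n r : ℕ} {b : Fin r → Fin n → ℤ} {t : Fin n → ℤ}
    (ht : t ∈ Sgroup b) (hnn : ∀ j, 0 ≤ t j) : monomialZ t ∈ RS b := by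
  intro d hd
  rw [monomialZ, MvPowerSeries.coeff_monomial] at hd
  split_ifs at hd with hde
  · subst hde; rw [expToZ_natExp hnn]; exact ht
  · exact absurd rfl hd

set_option maxHeartbeats 2000000 in
open Pointwise in
/-- if `h` is integral over a monomial ideal `I`, then
`supp(h) ⊆ Γ₊(I)`. -/
theorem supp_subset_newton_of_integral
    (n r : ℕ) (hn : 1 ≤ n) (hr : 1 ≤ r) (b : Fin r → Fin n → ℤ)
    (hb_ne : ∀ i, b i ≠ 0) (hb_nonneg : ∀ i j, 0 ≤ b i j)
    (hb_gen : AddSubgroup.closure (Set.range b) = (⊤ : AddSubgroup (Fin n → ℤ)))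
    (hdim : Submodule.span ℝ (coneS b) = (⊤ : Submodule ℝ (Fin n → ℝ)))
    (hstrict : ∀ x ∈ coneS b, -x ∈ coneS b → x = (0 : Fin n → ℝ))
    (A : Set (Fin n → ℤ)) (hA : A.Nonempty) (hAS : ∀ a ∈ A, a ∈ Sgroup b)
    (I : Ideal ↥(RS b))
    (hI : I = Ideal.span { m : ↥(RS b) |
      ∃ s ∈ A, (m : MvPowerSeries (Fin n) ℂ) = monomialZ s })
    (h : ↥(RS b)) (hint : IsIntegralOverIdeal I h) :
    ∀ s ∈ suppZ (h : MvPowerSeries (Fin n) ℂ), toReal s ∈ NewtonIdeal b I := by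
  classical
  subst hI
  set Ispan : Ideal ↥(RS b) := Ideal.span { m : ↥(RS b) |
      ∃ s ∈ A, (m : MvPowerSeries (Fin n) ℂ) = monomialZ s } with hIspan
  intro s hs
  by_contra hsN
  obtain ⟨m, hm0, a, haI, heq⟩ := hint
  have haT : ∀ i : Fin m, ∃ T : Finset ↥(RS b), (↑T ⊆ { mm : ↥(RS b) |
      ∃ t ∈ A, (mm : MvPowerSeries (Fin n) ℂ) = monomialZ t }) ∧
      a i ∈ (Ideal.span (T : Set ↥(RS b))) ^ ((i : ℕ) + 1) := by
    intro i
    exact exists_finset_pow _ _ _ (hIspan ▸ haI i)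
  choose T hTsub hTmem using haT
  set Tall : Finset ↥(RS b) := Finset.univ.biUnion T with hTall
  have hTallsub : ∀ g ∈ Tall, ∃ t ∈ A, (g : MvPowerSeries (Fin n) ℂ) = monomialZ t := by
    intro g hg
    rw [hTall, Finset.mem_biUnion] at hg
    obtain ⟨i, _, hgi⟩ := hg
    exact hTsub i hgi
  obtain ⟨a₀, ha₀⟩ := hA
  set Es : Set (Fin n → ℤ) := { t | t ∈ A ∧ ∃ g ∈ Tall,
      (g : MvPowerSeries (Fin n) ℂ) = monomialZ t } with hEsdef
  have hEsfin : Es.Finite := by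
    apply Set.Finite.of_finite_image (f := fun t => monomialZ t)
    · apply Set.Finite.subset (Set.Finite.image
        (fun g : ↥(RS b) => (g : MvPowerSeries (Fin n) ℂ)) Tall.finite_toSet)
      rintro _ ⟨t, ⟨_, g, hg, hgt⟩, rfl⟩
      exact ⟨g, hg, hgt⟩
    · intro t1 ht1 t2 ht2 hmono
      have h1 : ∀ j, 0 ≤ t1 j := sgroup_nonneg hb_nonneg (hAS _ ht1.1)
      have h2 : ∀ j, 0 ≤ t2 j := sgroup_nonneg hb_nonneg (hAS _ ht2.1)
      have hne : natExp t1 = natExp t2 := by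
        by_contra hne
        have h3 := congrArg (MvPowerSeries.coeff (R := ℂ) (natExp t1)) hmono
        simp only [monomialZ] at h3
        rw [MvPowerSeries.coeff_monomial, MvPowerSeries.coeff_monomial,
          if_pos rfl, if_neg hne] at h3
        exact one_ne_zero h3
      calc t1 = expToZ (natExp t1) := (expToZ_natExp h1).symm
        _ = expToZ (natExp t2) := by rw [hne]
        _ = t2 := expToZ_natExp h2
  set EF : Finset (Fin n → ℤ) := insert a₀ hEsfin.toFinset with hEF
  have hEFA : ∀ t ∈ EF, t ∈ A := by
    intro t ht
    rw [hEF, Finset.mem_insert] at ht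
    rcases ht with rfl | ht
    · exact ha₀
    · exact (hEsfin.mem_toFinset.mp ht).1
  have hEFne : EF.Nonempty := ⟨a₀, Finset.mem_insert_self _ _⟩
  have hEFnn : ∀ t ∈ EF, ∀ j, 0 ≤ t j :=
    fun t ht => sgroup_nonneg hb_nonneg (hAS t (hEFA t ht))
  set GJ : Set ↥(RS b) := { mm | ∃ t ∈ EF,
      (mm : MvPowerSeries (Fin n) ℂ) = monomialZ t } with hGJ
  have haJ : ∀ i : Fin m, a i ∈ (Ideal.span GJ) ^ ((i : ℕ) + 1) := by
    intro i
    refine Ideal.pow_right_mono (Ideal.span_le.mpr ?_) _ (hTmem i)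
    intro g hg
    have hg' : g ∈ Tall := by
      rw [hTall]; exact Finset.mem_biUnion.mpr ⟨i, Finset.mem_univ i, hg⟩
    obtain ⟨t, htA, hgt⟩ := hTallsub g hg'
    apply Ideal.subset_span
    refine ⟨t, ?_, hgt⟩
    rw [hEF]
    exact Finset.mem_insert_of_mem (hEsfin.mem_toFinset.mpr ⟨htA, g, hg', hgt⟩)
  -- the base set of the Newton polyhedron contains the exponents in EF
  have hUmem : ∀ t ∈ EF, t ∈ ⋃ g ∈ (Ispan : Set ↥(RS b)),
      suppZ (g : MvPowerSeries (Fin n) ℂ) := by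
    intro t ht
    have hnn := hEFnn t ht
    have htS := hAS t (hEFA t ht)
    refine Set.mem_iUnion₂.mpr ⟨⟨monomialZ t, monomialZ_mem_RS htS hnn⟩, ?_, ?_⟩
    · rw [hIspan]
      exact Ideal.subset_span ⟨t, hEFA t ht, rfl⟩
    · exact ⟨natExp t, by simp [monomialZ, MvPowerSeries.coeff_monomial],
        (expToZ_natExp hnn).symm⟩
  -- the closed convex set D
  set Fs : Set (Fin n → ℝ) := toReal '' (EF : Set (Fin n → ℤ)) with hFs
  have hFsfin : Fs.Finite := (EF.finite_toSet).image _
  set D : Set (Fin n → ℝ) := convexHull ℝ Fs + coneS b with hD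
  have hNdef : NewtonIdeal b Ispan = convexHull ℝ {x | ∃ k ∈ ⋃ g ∈ (Ispan : Set ↥(RS b)),
      suppZ (g : MvPowerSeries (Fin n) ℂ), ∃ v ∈ coneS b, x = toReal k + v} := rfl
  have hDN : D ⊆ NewtonIdeal b Ispan := by
    rintro x hx
    rw [hD, Set.mem_add] at hx
    obtain ⟨p, hp, w, hw, rfl⟩ := hx
    have h1 : p + w ∈ convexHull ℝ (Fs + {w}) := by
      rw [convexHull_add, convexHull_singleton]
      exact Set.add_mem_add hp rfl
    have h2 : Fs + {w} ⊆ {x | ∃ k ∈ ⋃ g ∈ (Ispan : Set ↥(RS b)),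
        suppZ (g : MvPowerSeries (Fin n) ℂ), ∃ v ∈ coneS b, x = toReal k + v} := by
      rintro y hy
      rw [Set.mem_add] at hy
      obtain ⟨q, hq, w', hw', rfl⟩ := hy
      rw [Set.mem_singleton_iff] at hw'
      obtain ⟨t, htEF, rfl⟩ := hq
      exact ⟨t, hUmem t (Finset.mem_coe.mp htEF), w', by rw [hw']; exact hw, rfl⟩
    rw [hNdef]
    exact convexHull_mono h2 h1
  have hDclosed : IsClosed D := by
    rw [hD]
    exact IsClosed.add_left_of_isCompact (coneS_isClosed hb_ne hb_nonneg)
      (hFsfin.isCompact_convexHull (𝕜 := ℝ))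
  have hDconv : Convex ℝ D := by
    rw [hD]; exact (convex_convexHull ℝ Fs).add coneS_convex
  have hsD : toReal s ∉ D := fun hmem => hsN (hDN hmem)
  obtain ⟨f, u, hfs, hfD⟩ := geometric_hahn_banach_point_closed hDconv hDclosed hsD
  have hED : ∀ t ∈ EF, toReal t ∈ D := by
    intro t ht
    have h1 : toReal t ∈ convexHull ℝ Fs :=
      subset_convexHull ℝ Fs ⟨t, Finset.mem_coe.mpr ht, rfl⟩
    have h2 := Set.add_mem_add h1 (coneS_zero (b := b))
    rw [add_zero] at h2
    rw [hD]
    exact h2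
  have hfE : ∀ t ∈ EF, u < f (toReal t) := fun t ht => hfD _ (hED t ht)
  have hu0 : u < f (toReal a₀) := hfE a₀ (Finset.mem_insert_self _ _)
  have hfcone : ∀ w ∈ coneS b, 0 ≤ f w := by
    intro w hw
    by_contra hneg
    push_neg at hneg
    have h1 : 0 < -f w := by linarith
    have hne : f w ≠ 0 := by linarith
    set tp : ℝ := (f (toReal a₀) - u + 1) / (-f w) with htp
    have htp0 : 0 ≤ tp := div_nonneg (by linarith) h1.le
    have hmem : toReal a₀ + tp • w ∈ D := by
      rw [hD]
      exact Set.add_mem_add (subset_convexHull ℝ Fs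
        ⟨a₀, Finset.mem_coe.mpr (Finset.mem_insert_self _ _), rfl⟩) (coneS_smul htp0 hw)
    have h2 := hfD _ hmem
    rw [map_add, map_smul, smul_eq_mul] at h2
    have h3 : tp * f w = -(f (toReal a₀) - u + 1) := by
      rw [htp]
      field_simp
    linarith
  -- the perturbed linear functional
  set gS : (Fin n → ℝ) → ℝ := fun y => ∑ j, y j with hgSdef
  have hδ : 0 < u - f (toReal s) := by linarith
  obtain ⟨tM, htM, hmax⟩ := Finset.exists_max_image EF
    (fun t => gS (toReal s) - gS (toReal t)) hEFne
  set B : ℝ := max (gS (toReal s) - gS (toReal tM)) 0 + 1 with hB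
  have hBpos : 0 < B := by rw [hB]; positivity
  set ε : ℝ := (u - f (toReal s)) / B with hε
  have hεpos : 0 < ε := div_pos hδ hBpos
  have hsep : ∀ t ∈ EF,
      f (toReal s) + ε * gS (toReal s) < f (toReal t) + ε * gS (toReal t) := by
    intro t ht
    have h1 : gS (toReal s) - gS (toReal t) < B := by
      have hm1 := hmax t ht
      have h2 : gS (toReal s) - gS (toReal tM) ≤ max (gS (toReal s) - gS (toReal tM)) 0 :=
        le_max_left _ _
      rw [hB]
      linarith
    have h2 : ε * (gS (toReal s) - gS (toReal t)) < ε * B := mul_lt_mul_of_pos_left h1 hεpos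
    have h3 : ε * B = u - f (toReal s) := by
      rw [hε]; field_simp
    have h4 := hfE t ht
    rw [mul_sub] at h2
    linarith
  set V : (Fin n → ℤ) → ℝ := fun k => f (toReal k) + ε * gS (toReal k) with hV
  set W : (Fin n →₀ ℕ) → ℝ := fun d => V (expToZ d) with hW
  have hgSadd : ∀ x y : Fin n → ℝ, gS (x + y) = gS x + gS y := by
    intro x y
    simp [hgSdef, Finset.sum_add_distrib]
  have hWadd : ∀ d e, W (d + e) = W d + W e := by
    intro d e
    simp only [hW, hV]
    rw [expToZ_add, toReal_add, map_add, hgSadd]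
    ring
  have hVS : ∀ k, k ∈ Sgroup b → 0 ≤ V k := by
    intro k hk
    have h1 : 0 ≤ f (toReal k) := hfcone _ (toReal_mem_coneS hk)
    have h2 : 0 ≤ gS (toReal k) := by
      rw [hgSdef]
      apply Finset.sum_nonneg
      intro j _
      have := sgroup_nonneg hb_nonneg hk j
      simp only [toReal]
      exact_mod_cast this
    simp only [hV]
    exact add_nonneg h1 (mul_nonneg hεpos.le h2)
  have hWS : ∀ d, expToZ d ∈ Sgroup b → 0 ≤ W d := by
    intro d hd
    simp only [hW]
    exact hVS _ hd
  obtain ⟨tmin, htmin, hmin⟩ := Finset.exists_min_image EF V hEFne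
  have hVsl : V s < V tmin := by
    have := hsep tmin htmin
    simp only [hV]
    exact this
  have hJgen : ∀ g ∈ GJ, ∀ d,
      MvPowerSeries.coeff (R := ℂ) d (g : MvPowerSeries (Fin n) ℂ) ≠ 0 → V tmin ≤ W d := by
    rintro g ⟨t, htEF, hgt⟩ d hd
    rw [hgt, monomialZ, MvPowerSeries.coeff_monomial] at hd
    split_ifs at hd with hde
    · subst hde
      have hWt : W (natExp t) = V t := by
        simp only [hW]
        rw [expToZ_natExp (hEFnn t htEF)]
      rw [hWt]
      exact hmin t htEF
    · exact absurd rfl hd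
  have haJb : ∀ i : Fin m, ∀ d,
      MvPowerSeries.coeff (R := ℂ) d ((a i : ↥(RS b)) : MvPowerSeries (Fin n) ℂ) ≠ 0 →
      (((i : ℕ) : ℝ) + 1) * V tmin ≤ W d :=
    fun i => lev_span_pow hWadd hWS GJ hJgen (i : ℕ) (a i) (haJ i)
  -- the minimum level of the support of h
  obtain ⟨dS, hdS, hsd⟩ := hs
  have hWdS : W dS = V s := by
    simp only [hW]
    rw [← hsd]
  set Fset : Set (Fin n →₀ ℕ) := { d |
    MvPowerSeries.coeff (R := ℂ) d (h : MvPowerSeries (Fin n) ℂ) ≠ 0 ∧ W d ≤ V s } with hFsetdef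
  have hFsetfin : Fset.Finite := by
    set Nb : ℕ := ⌈V s / ε⌉₊ with hNb
    have hbound : ∀ d ∈ Fset, ∀ j, d j ≤ Nb := by
      rintro d ⟨hd1, hd2⟩ j
      have hSd : expToZ d ∈ Sgroup b := mem_RS h.2 d hd1
      have h1 : 0 ≤ f (toReal (expToZ d)) := hfcone _ (toReal_mem_coneS hSd)
      have hWd : W d = f (toReal (expToZ d)) + ε * gS (toReal (expToZ d)) := by
        simp only [hW, hV]
      have h2 : ε * gS (toReal (expToZ d)) ≤ V s := by
        rw [hWd] at hd2; linarith
      have h3 : gS (toReal (expToZ d)) ≤ V s / ε := by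
        rw [le_div_iff₀ hεpos]
        linarith [mul_comm (gS (toReal (expToZ d))) ε]
      have h4 : ((d j : ℕ) : ℝ) ≤ gS (toReal (expToZ d)) := by
        have hnn : ∀ j', (0:ℝ) ≤ toReal (expToZ d) j' := by
          intro j'
          simp only [toReal, expToZ]
          positivity
        have h6 : toReal (expToZ d) j ≤ ∑ j', toReal (expToZ d) j' :=
          Finset.single_le_sum (fun j' _ => hnn j') (Finset.mem_univ j)
        have heq1 : toReal (expToZ d) j = ((d j : ℕ) : ℝ) := by
          simp [toReal, expToZ]
        rw [heq1] at h6
        simpa [hgSdef] using h6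
      have h5 : ((d j : ℕ) : ℝ) ≤ (Nb : ℝ) := le_trans h4 (h3.trans (Nat.le_ceil _))
      exact_mod_cast h5
    apply Set.Finite.of_finite_image (f := fun d : Fin n →₀ ℕ => (d : Fin n → ℕ))
    · apply Set.Finite.subset (Set.Finite.pi (fun _ : Fin n => Set.finite_Iic Nb))
      rintro _ ⟨d, hd, rfl⟩
      rw [Set.mem_univ_pi]
      intro j
      exact hbound d hd j
    · exact Set.injOn_of_injective (DFunLike.coe_injective)
  have hdSF : dS ∈ Fset := ⟨hdS, le_of_eq hWdS⟩
  obtain ⟨dmin, hdmin, hdminle⟩ := Set.exists_min_image Fset W hFsetfin ⟨dS, hdSF⟩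
  have hmuglob : ∀ d, MvPowerSeries.coeff (R := ℂ) d (h : MvPowerSeries (Fin n) ℂ) ≠ 0 →
      W dmin ≤ W d := by
    intro d hd
    by_cases hle : W d ≤ V s
    · exact hdminle d ⟨hd, hle⟩
    · push_neg at hle
      have h6 := hdminle dS hdSF
      rw [hWdS] at h6
      linarith
  have hmuVs : W dmin ≤ V s := by
    have h6 := hdminle dS hdSF
    rwa [hWdS] at h6
  have hmul : W dmin < V tmin := lt_of_le_of_lt hmuVs hVsl
  -- the initial part P of h
  set P : MvPowerSeries (Fin n) ℂ := fun d =>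
    if W d = W dmin then MvPowerSeries.coeff (R := ℂ) d (h : MvPowerSeries (Fin n) ℂ) else 0 with hPdef
  have hPcoeff : ∀ d, MvPowerSeries.coeff (R := ℂ) d P =
      if W d = W dmin then MvPowerSeries.coeff (R := ℂ) d (h : MvPowerSeries (Fin n) ℂ) else 0 := by
    intro d
    rw [MvPowerSeries.coeff_apply]
  have hPne : P ≠ 0 := by
    intro h0
    have h1 : MvPowerSeries.coeff (R := ℂ) dmin P = 0 := by rw [h0]; simp
    rw [hPcoeff, if_pos rfl] at h1
    exact hdmin.1 h1
  obtain ⟨dst, hdst⟩ : ∃ d, MvPowerSeries.coeff (R := ℂ) d (P ^ m) ≠ 0 := by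
    by_contra hc
    push_neg at hc
    exact (pow_ne_zero m hPne) (MvPowerSeries.ext fun d => by rw [hc d, map_zero])
  have hPge : ∀ d, MvPowerSeries.coeff (R := ℂ) d P ≠ 0 → W dmin ≤ W d := by
    intro d hd
    rw [hPcoeff] at hd
    split_ifs at hd with hWe
    · exact le_of_eq hWe.symm
    · exact absurd rfl hd
  have hPle : ∀ d, MvPowerSeries.coeff (R := ℂ) d P ≠ 0 → W d ≤ W dmin := by
    intro d hd
    rw [hPcoeff] at hd
    split_ifs at hd with hWe
    · exact le_of_eq hWe
    · exact absurd rfl hd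
  have hWdst : W dst = (m : ℝ) * W dmin :=
    le_antisymm (lev_pow_le hWadd hPle m dst hdst) (lev_pow_ge hWadd hPge m dst hdst)
  have hEQ := coeff_pow_initial hWadd hmuglob hPcoeff m dst (le_of_eq hWdst)
  have hch : MvPowerSeries.coeff (R := ℂ) dst ((h : MvPowerSeries (Fin n) ℂ) ^ m) ≠ 0 := by
    rw [hEQ]; exact hdst
  -- the integral equation kills the coefficient at dst
  have heq2 : ((h : MvPowerSeries (Fin n) ℂ)) ^ m
      + ∑ i : Fin m, ((a i : ↥(RS b)) : MvPowerSeries (Fin n) ℂ) *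
        ((h : MvPowerSeries (Fin n) ℂ)) ^ (m - 1 - (i : ℕ)) = 0 := by
    have h7 := congrArg (Subalgebra.val (RS b)) heq
    simpa using h7
  have hterm : ∀ i : Fin m, MvPowerSeries.coeff (R := ℂ) dst
      (((a i : ↥(RS b)) : MvPowerSeries (Fin n) ℂ) *
        ((h : MvPowerSeries (Fin n) ℂ)) ^ (m - 1 - (i : ℕ))) = 0 := by
    intro i
    rw [MvPowerSeries.coeff_mul]
    apply Finset.sum_eq_zero
    intro p hp
    rw [Finset.HasAntidiagonal.mem_antidiagonal] at hp
    by_contra hne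
    have h1 := haJb i p.1 (left_ne_zero_of_mul hne)
    have h2 : ((m - 1 - (i : ℕ) : ℕ) : ℝ) * W dmin ≤ W p.2 :=
      lev_pow_ge hWadd hmuglob (m - 1 - (i : ℕ)) p.2 (right_ne_zero_of_mul hne)
    have hsum : W p.1 + W p.2 = (m : ℝ) * W dmin := by
      rw [← hWadd, hp, hWdst]
    have hilt : (i : ℕ) + 1 ≤ m := i.isLt
    have hcast : ((m - 1 - (i : ℕ) : ℕ) : ℝ) = (m : ℝ) - (((i : ℕ) : ℝ) + 1) := by
      have hsub : m - 1 - (i : ℕ) = m - ((i : ℕ) + 1) := by omega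
      rw [hsub, Nat.cast_sub hilt]
      push_cast
      ring
    rw [hcast] at h2
    have hpos : (0 : ℝ) < ((i : ℕ) : ℝ) + 1 := by positivity
    have hlt := mul_lt_mul_of_pos_left hmul hpos
    have hexp : ((m : ℝ) - (((i : ℕ) : ℝ) + 1)) * W dmin
        = (m : ℝ) * W dmin - (((i : ℕ) : ℝ) + 1) * W dmin := by ring
    rw [hexp] at h2
    linarith
  have hfinal := congrArg (MvPowerSeries.coeff (R := ℂ) dst) heq2
  rw [map_add, map_sum, map_zero] at hfinal
  rw [Finset.sum_congr rfl (fun i _ => hterm i), Finset.sum_const_zero, add_zero] at hfinal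
  exact hch hfinal

end ToricNewton
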